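/- Let q ∈ ℂ. The family of power series (L^{(q)}_{n,I})_{I ⊆ [n−1]} is linearly independent over ℂ for every integer n ≥ 1 if and only if q is not a root of unity (i.e. q^m ≠ 1 for every integer m ≥ 1). -/

import Mathlib

open Finset
open scoped Classical

namespace ExtPeaks

/-- `fget g j` is the `j`-th entry (1-indexed) of the sequence `g : Fin n → ℕ`,
so `fget g j = g ⟨j - 1, _⟩` for `1 ≤ j ≤ n`. -/
def fget {n : ℕ} (g : Fin n → ℕ) (j : ℕ) : ℕ :=
  if h : j - 1 < n then g ⟨j - 1, h⟩ else 0

/-- `Peak(I) = {i ∈ I : i ≥ 2 and i - 1 ∉ I}`. -/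
def peakOf (I : Finset ℕ) : Finset ℕ :=
  I.filter fun i => 2 ≤ i ∧ i - 1 ∉ I

/-- The monomial `x_{i_1} ⋯ x_{i_n}` attached to a sequence `g`, as a `Finsupp`. -/
noncomputable def monomialOf {n : ℕ} (g : Fin n → ℕ) : ℕ →₀ ℕ :=
  ∑ j, Finsupp.single (g j) 1

/-- The (finitely many) weakly increasing sequences of positive integers of length `n`,
satisfying the peak condition `i_{j-1} < i_{j+1}` for `j ∈ Peak(I)`, with monomial `d`. -/
noncomputable def Lseqs (n : ℕ) (I : Finset ℕ) (d : ℕ →₀ ℕ) : Finset (Fin n → ℕ) :=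
  (Fintype.piFinset fun _ => d.support).filter fun g =>
    (∀ j k : Fin n, j ≤ k → g j ≤ g k) ∧ (∀ j, 1 ≤ g j) ∧
    (∀ j ∈ peakOf I, fget g (j - 1) < fget g (j + 1)) ∧ monomialOf g = d

/-- The `q`-fundamental quasisymmetric function `L^{(q)}_{n,I}`, as a formal power
series in the variables `x_1, x_2, …` (defined coefficientwise). -/
noncomputable def Lq (q : ℂ) (n : ℕ) (I : Finset ℕ) : MvPowerSeries ℕ ℂ :=
  fun d => ∑ g ∈ Lseqs n I d,
    q ^ (I.filter fun j => fget g j = fget g (j + 1)).card *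
      (q + 1) ^ (Finset.image g Finset.univ).card

/-- The weakly increasing sequences of positive integers of length `s` with
`i_j = i_{j+1}` for all `j ∈ I`, with monomial `d`. -/
noncomputable def etaSeqs (s : ℕ) (I : Finset ℕ) (d : ℕ →₀ ℕ) : Finset (Fin s → ℕ) :=
  (Fintype.piFinset fun _ => d.support).filter fun g =>
    (∀ j k : Fin s, j ≤ k → g j ≤ g k) ∧ (∀ j, 1 ≤ g j) ∧
    (∀ j ∈ I, fget g j = fget g (j + 1)) ∧ monomialOf g = d

/-- The enriched `q`-monomial quasisymmetric function `η^{(q)}_{s,I}`. -/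
noncomputable def etaq (q : ℂ) (s : ℕ) (I : Finset ℕ) : MvPowerSeries ℕ ℂ :=
  fun d => ∑ g ∈ etaSeqs s I d, (q + 1) ^ (Finset.image g Finset.univ).card

/-- `I` is a `p`-extended peak set: `I ∪ {0}` contains no `p + 1` consecutive integers. -/
def IsExtPeakSet (p : ℕ) (I : Finset ℕ) : Prop :=
  ∀ a : ℕ, ¬ Finset.Icc a (a + p) ⊆ insert 0 I

/-- `s^{(p)}_n`: the number of `p`-extended peak subsets of `[n-1]`, with `s^{(p)}_0 = 0`. -/
noncomputable def sCount (p n : ℕ) : ℕ :=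
  if n = 0 then 0
  else ((Finset.Icc 1 (n - 1)).powerset.filter fun I => IsExtPeakSet p I).card

/-- The value `π(j)` of the permutation at the (1-indexed) position `j`,
as an element of `{1, …, n}`. -/
def pval {n : ℕ} (π : Equiv.Perm (Fin n)) (j : ℕ) : ℕ :=
  if h : j - 1 < n then (π ⟨j - 1, h⟩ : ℕ) + 1 else 0

/-- The descent set `Des(π) = {1 ≤ i ≤ n-1 : π(i) > π(i+1)}`. -/
def desSet {n : ℕ} (π : Equiv.Perm (Fin n)) : Finset ℕ :=
  (Finset.Icc 1 (n - 1)).filter fun i => pval π (i + 1) < pval π i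

/-- The peak set `Peak(π) = {2 ≤ i ≤ n-1 : π(i-1) < π(i) > π(i+1)}`. -/
def peakSet {n : ℕ} (π : Equiv.Perm (Fin n)) : Finset ℕ :=
  (Finset.Icc 2 (n - 1)).filter fun i =>
    pval π (i - 1) < pval π i ∧ pval π (i + 1) < pval π i

/-- The `p`-extended peak set `Peak_p(π)` of a permutation: the descents `i` such that
`i ≤ p - 1` or some position `i - j` (with `1 ≤ j ≤ p` and `i - j ≥ 1`) is not a descent. -/
def peakP {n : ℕ} (p : ℕ) (π : Equiv.Perm (Fin n)) : Finset ℕ :=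
  (desSet π).filter fun i =>
    i ≤ p - 1 ∨ ∃ j ∈ Finset.Icc 1 p, 1 ≤ i - j ∧ i - j ∉ desSet π

/-- `ρ_p = exp(-iπ(p-1)/(p+1))`. -/
noncomputable def rho (p : ℕ) : ℂ :=
  Complex.exp (-((Real.pi : ℂ) * ((p : ℂ) - 1) / ((p : ℂ) + 1)) * Complex.I)

/-- `[m]_c = 1 + c + ⋯ + c^(m-1)`. -/
noncomputable def qint (m : ℕ) (c : ℂ) : ℂ := ∑ j ∈ Finset.range m, c ^ j

/-- The entry of the transition matrix `B^{(q)}` at row `J`, column `I`: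
`Σ (-q)^{|K|} (q-1)^{|J'|}` over pairs `(J', K)` with `J' ⊆ I`, `K ⊆ Peak(I)`,
`J' ∩ K = ∅` and `J' ∪ (K-1) ∪ K = J`. -/
noncomputable def Bentry (q : ℂ) (J I : Finset ℕ) : ℂ :=
  ∑ J' ∈ I.powerset, ∑ K ∈ (peakOf I).powerset,
    if Disjoint J' K ∧ J' ∪ K.image (· - 1) ∪ K = J then
      (-q) ^ K.card * (q - 1) ^ J'.card
    else 0

/-- The collection of all subsets of `[n-1]` (the empty collection when `n = 0`,
so that `B_0` is the empty matrix). -/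
def subsetsOf (n : ℕ) : Finset (Finset ℕ) :=
  if n = 0 then ∅ else (Finset.Icc 1 (n - 1)).powerset

/-- The matrix `B_n^{(q)}`, with rows and columns indexed by the subsets of `[n-1]`. -/
noncomputable def Bmat (q : ℂ) (n : ℕ) : Matrix ↥(subsetsOf n) ↥(subsetsOf n) ℂ :=
  fun J I => Bentry q J.1 I.1

/-- The entry of `A_n^{(q)}` at row `J'`, column `I'`, namely
`B_n^{(q)}(J' ∪ {n-1}, I' ∪ {n-1})`. -/
noncomputable def Aentry (q : ℂ) (n : ℕ) (J I : Finset ℕ) : ℂ :=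
  Bentry q (insert (n - 1) J) (insert (n - 1) I)

/-- The matrix `A_n^{(q)}`, with rows and columns indexed by the subsets of `[n-2]`. -/
noncomputable def Amat (q : ℂ) (n : ℕ) :
    Matrix ↥(subsetsOf (n - 1)) ↥(subsetsOf (n - 1)) ℂ :=
  fun J I => Aentry q n J.1 I.1

/-- The dimension of the kernel of (the linear map associated with) `B_n^{(q)}`. -/
noncomputable def dimKer (q : ℂ) (n : ℕ) : ℕ :=
  Module.finrank ℂ (LinearMap.ker (Matrix.mulVecLin (Bmat q n)))


/-! ### Auxiliary material for the proof -/

noncomputable def qaux (q : ℂ) (k : ℕ) : ℂ := ∑ j ∈ Finset.range k, (-q) ^ j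

lemma qaux_one (q : ℂ) : qaux q 1 = 1 := by simp [qaux]

lemma qaux_succ (q : ℂ) (k : ℕ) : qaux q (k + 1) = 1 - q * qaux q k := by
  rw [qaux, geom_sum_succ, qaux]; ring

lemma one_add_mul_qaux (q : ℂ) (k : ℕ) : (1 + q) * qaux q k = 1 - (-q) ^ k := by
  induction k with
  | zero => simp [qaux]
  | succ k ih =>
      rw [qaux_succ]
      have : (1 + q) * (1 - q * qaux q k) = 1 + q - q * ((1 + q) * qaux q k) := by ring
      rw [this, ih]; ring

lemma fget_eq {n : ℕ} (g : Fin n → ℕ) {j : ℕ} (h : j - 1 < n) :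
    fget g j = g ⟨j - 1, h⟩ := dif_pos h

lemma monomialOf_apply {n : ℕ} (g : Fin n → ℕ) (a : ℕ) :
    monomialOf g a = (Finset.univ.filter fun j => g j = a).card := by
  rw [monomialOf, Finsupp.finset_sum_apply, Finset.card_filter]
  refine Finset.sum_congr rfl fun j _ => ?_
  rw [Finsupp.single_apply]

lemma mem_support_monomialOf {n : ℕ} (g : Fin n → ℕ) (a : ℕ) :
    a ∈ (monomialOf g).support ↔ ∃ j, g j = a := by
  rw [Finsupp.mem_support_iff, monomialOf_apply]
  constructor
  · intro h
    obtain ⟨j, _, hj2⟩ := Finset.filter_nonempty_iff.mp (Finset.card_pos.mp (Nat.pos_of_ne_zero h))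
    exact ⟨j, hj2⟩
  · rintro ⟨j, hj⟩
    exact Finset.card_ne_zero_of_mem (Finset.mem_filter.mpr ⟨Finset.mem_univ j, hj⟩)

/-- Monotonicity predicate matching the one used in `Lseqs`. -/
def Mono {n : ℕ} (g : Fin n → ℕ) : Prop := ∀ j k : Fin n, j ≤ k → g j ≤ g k

lemma card_filter_le_of_monomialOf_eq {n : ℕ} {g g' : Fin n → ℕ}
    (h : monomialOf g = monomialOf g') (a : ℕ) :
    (Finset.univ.filter fun j => g j ≤ a).card
      = (Finset.univ.filter fun j => g' j ≤ a).card := by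
  have hcard : ∀ b, (Finset.univ.filter fun j => g j = b).card
      = (Finset.univ.filter fun j => g' j = b).card := by
    intro b; rw [← monomialOf_apply, ← monomialOf_apply, h]
  induction a with
  | zero =>
      simpa [Nat.le_zero] using hcard 0
  | succ a ih =>
      have split : ∀ (f : Fin n → ℕ),
          (Finset.univ.filter fun j => f j ≤ a + 1)
            = (Finset.univ.filter fun j => f j ≤ a)
              ∪ (Finset.univ.filter fun j => f j = a + 1) := by
        intro f; ext j; simp only [Finset.mem_union, Finset.mem_filter, Finset.mem_univ,
          true_and]; omega
      have disj : ∀ (f : Fin n → ℕ),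
          Disjoint (Finset.univ.filter fun j => f j ≤ a)
            (Finset.univ.filter fun j => f j = a + 1) := by
        intro f
        refine Finset.disjoint_left.mpr fun j hj hj' => ?_
        simp only [Finset.mem_filter] at hj hj'; omega
      rw [split g, split g', Finset.card_union_of_disjoint (disj g),
        Finset.card_union_of_disjoint (disj g'), ih, hcard (a+1)]

lemma mono_le_iff {n : ℕ} {g : Fin n → ℕ} (hm : Mono g) (j : Fin n) (a : ℕ) :
    g j ≤ a ↔ (j : ℕ) < (Finset.univ.filter fun i => g i ≤ a).card := by
  constructor
  · intro h
    have hsub : Finset.Iic j ⊆ Finset.univ.filter fun i => g i ≤ a := by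
      intro i hi
      simp only [Finset.mem_Iic] at hi
      exact Finset.mem_filter.mpr ⟨Finset.mem_univ i, le_trans (hm i j hi) h⟩
    have := Finset.card_le_card hsub
    rw [Fin.card_Iic] at this; omega
  · intro h
    by_contra hg
    have hsub : (Finset.univ.filter fun i => g i ≤ a) ⊆ Finset.Iio j := by
      intro i hi
      simp only [Finset.mem_filter] at hi
      simp only [Finset.mem_Iio]
      by_contra hij
      exact hg (le_trans (hm j i (not_lt.mp hij)) hi.2)
    have := Finset.card_le_card hsub
    rw [Fin.card_Iio] at this; omega

lemma mono_eq_of_monomialOf_eq {n : ℕ} {g g' : Fin n → ℕ} (hm : Mono g) (hm' : Mono g')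
    (h : monomialOf g = monomialOf g') : g = g' := by
  funext j
  have h1 : g j ≤ g' j := by
    rw [mono_le_iff hm j, card_filter_le_of_monomialOf_eq h, ← mono_le_iff hm' j]
  have h2 : g' j ≤ g j := by
    rw [mono_le_iff hm' j, ← card_filter_le_of_monomialOf_eq h, ← mono_le_iff hm j]
  omega


/-- `gval E t = 1 + #{s ∈ [t] : s ∉ E}`, the value of the canonical sequence after `t` steps. -/
noncomputable def gval (E : Finset ℕ) (t : ℕ) : ℕ :=
  1 + ((Finset.Icc 1 t).filter fun s => s ∉ E).card

/-- The canonical weakly increasing sequence whose equality set is `E`. -/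
noncomputable def gseqF (n : ℕ) (E : Finset ℕ) : Fin n → ℕ := fun j => gval E (j : ℕ)

lemma gval_mono (E : Finset ℕ) {t t' : ℕ} (h : t ≤ t') : gval E t ≤ gval E t' := by
  unfold gval
  have := Finset.card_le_card
    (Finset.filter_subset_filter (fun s => s ∉ E)
      (Finset.Icc_subset_Icc_right (a := 1) h))
  omega

lemma gval_succ (E : Finset ℕ) (t : ℕ) :
    gval E (t + 1) = gval E t + (if t + 1 ∈ E then 0 else 1) := by
  unfold gval
  have hins : Finset.Icc 1 (t + 1) = insert (t + 1) (Finset.Icc 1 t) :=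
    (Finset.insert_Icc_right_eq_Icc_add_one (by omega)).symm
  rw [hins, Finset.filter_insert]
  by_cases h : t + 1 ∈ E
  · simp [h]
  · rw [if_pos h, Finset.card_insert_of_notMem (by simp [Finset.mem_Icc]), if_neg h]
    omega

lemma gval_zero (E : Finset ℕ) : gval E 0 = 1 := by
  simp [gval]

lemma mono_gseqF (n : ℕ) (E : Finset ℕ) : Mono (gseqF n E) := by
  intro j k h
  exact gval_mono E (by exact_mod_cast h)

lemma pos_gseqF (n : ℕ) (E : Finset ℕ) (j : Fin n) : 1 ≤ gseqF n E j :=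
  Nat.le_add_right 1 _

lemma fget_gseq {n : ℕ} (E : Finset ℕ) {t : ℕ} (h1 : 1 ≤ t) (h2 : t ≤ n) :
    fget (gseqF n E) t = gval E (t - 1) := by
  have h : t - 1 < n := by omega
  rw [fget_eq _ h]
  show gval E ((⟨t - 1, h⟩ : Fin n) : ℕ) = gval E (t - 1)
  rfl

lemma gseq_eq_iff {n : ℕ} (E : Finset ℕ) {t : ℕ} (h1 : 1 ≤ t) (h2 : t ≤ n - 1)
    (hn : 1 ≤ n) :
    (fget (gseqF n E) t = fget (gseqF n E) (t + 1)) ↔ t ∈ E := by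
  rw [fget_gseq E h1 (by omega), fget_gseq E (by omega : 1 ≤ t + 1) (by omega : t + 1 ≤ n)]
  have e1 : t + 1 - 1 = t := by omega
  have e2 : t - 1 + 1 = t := by omega
  rw [e1, ← e2, gval_succ, e2]
  by_cases h : t ∈ E
  · simp [h]
  · simp [h]

lemma gseq_lt_iff {n : ℕ} (E : Finset ℕ) {j : ℕ} (h2 : 2 ≤ j) (hj : j ≤ n - 1)
    (hn : 1 ≤ n) :
    (fget (gseqF n E) (j - 1) < fget (gseqF n E) (j + 1)) ↔ ¬(j - 1 ∈ E ∧ j ∈ E) := by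
  rw [fget_gseq E (by omega : 1 ≤ j - 1) (by omega), fget_gseq E (by omega : 1 ≤ j + 1) (by omega)]
  have e1 : j + 1 - 1 = j := by omega
  have e2 : j - 1 - 1 + 1 = j - 1 := by omega
  have e3 : j - 1 + 1 = j := by omega
  have hstep1 : gval E (j - 1) = gval E (j - 1 - 1) + (if j - 1 ∈ E then 0 else 1) := by
    rw [← e2, gval_succ, e2]
  have hstep2 : gval E j = gval E (j - 1) + (if j ∈ E then 0 else 1) := by
    rw [← e3, gval_succ, e3]
  rw [e1, hstep2, hstep1]
  by_cases ha : j - 1 ∈ E <;> by_cases hb : j ∈ E <;> simp [ha, hb] <;> omega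

lemma Lq_apply (q : ℂ) (n : ℕ) (I : Finset ℕ) (d : ℕ →₀ ℕ) :
    Lq q n I d = ∑ g ∈ Lseqs n I d,
      q ^ (I.filter fun j => fget g j = fget g (j + 1)).card *
        (q + 1) ^ (Finset.image g Finset.univ).card := rfl

lemma mem_Lseqs {n : ℕ} {I : Finset ℕ} {d : ℕ →₀ ℕ} {g : Fin n → ℕ} :
    g ∈ Lseqs n I d ↔ (∀ j, g j ∈ d.support) ∧ Mono g ∧ (∀ j, 1 ≤ g j) ∧
      (∀ j ∈ peakOf I, fget g (j - 1) < fget g (j + 1)) ∧ monomialOf g = d := by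
  unfold Lseqs Mono
  rw [Finset.mem_filter, Fintype.mem_piFinset]

lemma mem_peakOf {I : Finset ℕ} {j : ℕ} :
    j ∈ peakOf I ↔ j ∈ I ∧ 2 ≤ j ∧ j - 1 ∉ I := by
  unfold peakOf; rw [Finset.mem_filter]

lemma image_gseqF {n : ℕ} (hn : 1 ≤ n) {E : Finset ℕ} (hE : E ⊆ Finset.Icc 1 (n - 1)) :
    Finset.image (gseqF n E) Finset.univ = Finset.Icc 1 (n - E.card) := by
  have hEcard : E.card ≤ n - 1 := by
    have := Finset.card_le_card hE
    rwa [Nat.card_Icc, Nat.add_sub_cancel] at this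
  set c : ℕ := ((Finset.Icc 1 (n - 1)).filter fun s => s ∉ E).card with hc
  have hcval : c = n - 1 - E.card := by
    rw [hc, Finset.filter_not, Finset.card_sdiff_of_subset (Finset.filter_subset _ _)]
    congr 1
    · rw [Nat.card_Icc]; omega
    · congr 1
      rw [Finset.filter_mem_eq_inter, Finset.inter_eq_right.mpr hE]
  have htop : ∀ t ≤ n - 1, gval E t ≤ 1 + c := by
    intro t ht
    have := gval_mono E ht
    simpa [gval, ← hc] using this
  have hsurj : ∀ v, 1 ≤ v → v ≤ 1 + c → ∃ t ≤ n - 1, gval E t = v := by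
    intro v hv1
    induction v, hv1 using Nat.le_induction with
    | base => intro _; exact ⟨0, by omega, gval_zero E⟩
    | succ v hv ih =>
        intro hvc
        obtain ⟨t, ht, hgt⟩ := ih (by omega)
        have hSne : ((Finset.range n).filter fun t => gval E t = v).Nonempty :=
          ⟨t, Finset.mem_filter.mpr ⟨Finset.mem_range.mpr (by omega), hgt⟩⟩
        set T := ((Finset.range n).filter fun t => gval E t = v).max' hSne with hT
        have hTmem := Finset.max'_mem _ hSne
        rw [← hT] at hTmem
        have hTn : T < n := Finset.mem_range.mp (Finset.mem_filter.mp hTmem).1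
        have hTv : gval E T = v := (Finset.mem_filter.mp hTmem).2
        have hTlt : T < n - 1 := by
          rcases Nat.lt_or_ge T (n - 1) with h | h
          · exact h
          · exfalso
            have : T = n - 1 := by omega
            have h1 : gval E (n - 1) = 1 + c := by simp [gval, ← hc]
            rw [this, h1] at hTv; omega
        have hstep := gval_succ E T
        by_cases hTE : T + 1 ∈ E
        · exfalso
          rw [if_pos hTE] at hstep
          have : T + 1 ∈ (Finset.range n).filter fun t => gval E t = v :=
            Finset.mem_filter.mpr ⟨Finset.mem_range.mpr (by omega), by omega⟩
          have := Finset.le_max' _ _ this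
          omega
        · rw [if_neg hTE] at hstep
          exact ⟨T + 1, by omega, by omega⟩
  ext v
  simp only [Finset.mem_image, Finset.mem_univ, true_and, Finset.mem_Icc]
  constructor
  · rintro ⟨j, rfl⟩
    have hj : (j : ℕ) ≤ n - 1 := by omega
    have := htop (j : ℕ) hj
    have hpos := pos_gseqF n E j
    have : gseqF n E j ≤ 1 + c := this
    constructor
    · exact hpos
    · unfold gseqF at *; omega
  · rintro ⟨hv1, hv2⟩
    obtain ⟨t, ht, hgt⟩ := hsurj v hv1 (by omega)
    exact ⟨⟨t, by omega⟩, hgt⟩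

lemma card_image_gseqF {n : ℕ} (hn : 1 ≤ n) {E : Finset ℕ} (hE : E ⊆ Finset.Icc 1 (n - 1)) :
    (Finset.image (gseqF n E) Finset.univ).card = n - E.card := by
  have hEcard : E.card ≤ n - 1 := by
    have := Finset.card_le_card hE
    rwa [Nat.card_Icc, Nat.add_sub_cancel] at this
  rw [image_gseqF hn hE, Nat.card_Icc]
  omega

/-- The key coefficient formula: the coefficient of `L^{(q)}_{n,I}` at the monomial of the
canonical sequence `gseqF n E`. -/
lemma Lq_coeff_gseq (q : ℂ) {n : ℕ} (hn : 1 ≤ n) {I E : Finset ℕ}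
    (hI : I ⊆ Finset.Icc 1 (n - 1)) (hE : E ⊆ Finset.Icc 1 (n - 1)) :
    Lq q n I (monomialOf (gseqF n E)) =
      (if ∀ j ∈ peakOf I, ¬(j - 1 ∈ E ∧ j ∈ E) then q ^ (I ∩ E).card else 0) *
        (q + 1) ^ (n - E.card) := by
  set g := gseqF n E with hg
  have hmono : Mono g := mono_gseqF n E
  have hpk : (∀ j ∈ peakOf I, fget g (j - 1) < fget g (j + 1)) ↔
      (∀ j ∈ peakOf I, ¬(j - 1 ∈ E ∧ j ∈ E)) := by
    apply forall₂_congr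
    intro j hj
    obtain ⟨hjI, hj2, _⟩ := mem_peakOf.mp hj
    have hjn : j ≤ n - 1 := (Finset.mem_Icc.mp (hI hjI)).2
    exact gseq_lt_iff E hj2 hjn hn
  have hsub : ∀ h ∈ Lseqs n I (monomialOf g), h = g := by
    intro h hh
    obtain ⟨_, hm, _, _, hmono'⟩ := mem_Lseqs.mp hh
    exact mono_eq_of_monomialOf_eq hm hmono hmono'
  by_cases hχ : ∀ j ∈ peakOf I, ¬(j - 1 ∈ E ∧ j ∈ E)
  · have hmem : g ∈ Lseqs n I (monomialOf g) := by
      rw [mem_Lseqs]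
      exact ⟨fun j => (mem_support_monomialOf g (g j)).mpr ⟨j, rfl⟩,
        hmono, pos_gseqF n E, hpk.mpr hχ, rfl⟩
    have hset : Lseqs n I (monomialOf g) = {g} := by
      apply Finset.Subset.antisymm
      · intro h hh
        rw [Finset.mem_singleton]
        exact hsub h hh
      · intro h hh
        rw [Finset.mem_singleton] at hh
        rw [hh]; exact hmem
    rw [Lq_apply, hset, Finset.sum_singleton, if_pos hχ]
    have hfilter : I.filter (fun j => fget g j = fget g (j + 1)) = I ∩ E := by
      ext j
      rw [Finset.mem_filter, Finset.mem_inter]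
      constructor
      · rintro ⟨hjI, hjeq⟩
        have hjn := Finset.mem_Icc.mp (hI hjI)
        exact ⟨hjI, (gseq_eq_iff E hjn.1 hjn.2 hn).mp hjeq⟩
      · rintro ⟨hjI, hjE⟩
        have hjn := Finset.mem_Icc.mp (hI hjI)
        exact ⟨hjI, (gseq_eq_iff E hjn.1 hjn.2 hn).mpr hjE⟩
    rw [hfilter, card_image_gseqF hn hE]
  · have hset : Lseqs n I (monomialOf g) = ∅ := by
      rw [Finset.eq_empty_iff_forall_notMem]
      intro h hh
      have hhg := hsub h hh
      subst hhg
      obtain ⟨_, _, _, hp, _⟩ := mem_Lseqs.mp hh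
      exact hχ (hpk.mp hp)
    rw [Lq_apply, hset, Finset.sum_empty, if_neg hχ, zero_mul]


lemma peakOf_insert_top {m : ℕ} {K : Finset ℕ} (hK : K ⊆ Finset.Icc 1 m) {j : ℕ} :
    j ∈ peakOf (insert (m + 1) K) ↔
      (j ∈ peakOf K ∨ (j = m + 1 ∧ 2 ≤ m + 1 ∧ m ∉ K)) := by
  simp only [mem_peakOf, Finset.mem_insert]
  by_cases hj : j = m + 1
  · subst hj
    have h1 : m + 1 ∉ K := fun h => by have := Finset.mem_Icc.mp (hK h); omega
    have h2 : m + 1 - 1 = m := by omega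
    rw [h2]
    constructor
    · rintro ⟨_, h5, h6⟩
      exact Or.inr ⟨rfl, h5, fun hm => h6 (Or.inr hm)⟩
    · rintro (⟨hL, _, _⟩ | ⟨_, h5, h6⟩)
      · exact absurd hL h1
      · refine ⟨Or.inl rfl, h5, ?_⟩
        rintro (h | h)
        · omega
        · exact h6 h
  · constructor
    · rintro ⟨hjK, h2j, hnot⟩
      rcases hjK with h | h
      · exact absurd h hj
      · exact Or.inl ⟨h, h2j, fun hh => hnot (Or.inr hh)⟩
    · rintro (⟨hjK, h2j, hnot⟩ | ⟨heq, _⟩)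
      · have hjm := Finset.mem_Icc.mp (hK hjK)
        refine ⟨Or.inr hjK, h2j, ?_⟩
        rintro (h | h)
        · omega
        · exact hnot h
      · exact absurd heq hj

lemma chi_insert_top {m : ℕ} {K E : Finset ℕ} (hK : K ⊆ Finset.Icc 1 m)
    (hE : E ⊆ Finset.Icc 1 m) :
    (∀ j ∈ peakOf (insert (m + 1) K), ¬(j - 1 ∈ E ∧ j ∈ E)) ↔
      (∀ j ∈ peakOf K, ¬(j - 1 ∈ E ∧ j ∈ E)) := by
  constructor
  · intro h j hj
    exact h j ((peakOf_insert_top hK).mpr (Or.inl hj))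
  · intro h j hj
    rcases (peakOf_insert_top hK).mp hj with h1 | ⟨rfl, _, _⟩
    · exact h _ h1
    · rintro ⟨_, hin⟩
      have := Finset.mem_Icc.mp (hE hin); omega

lemma chi_E_insert {m : ℕ} {K E' : Finset ℕ} (hK : K ⊆ Finset.Icc 1 m) :
    (∀ j ∈ peakOf K, ¬(j - 1 ∈ insert (m + 1) E' ∧ j ∈ insert (m + 1) E')) ↔
      (∀ j ∈ peakOf K, ¬(j - 1 ∈ E' ∧ j ∈ E')) := by
  apply forall₂_congr
  intro j hj
  obtain ⟨hjK, hj2, _⟩ := mem_peakOf.mp hj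
  have hjm := Finset.mem_Icc.mp (hK hjK)
  have hne1 : j ≠ m + 1 := by omega
  have hne2 : j - 1 ≠ m + 1 := by omega
  simp [Finset.mem_insert, hne1, hne2]

lemma chi_insert_insert {m : ℕ} {K E' : Finset ℕ} (hK : K ⊆ Finset.Icc 1 m)
    (hE' : E' ⊆ Finset.Icc 1 m) :
    (∀ j ∈ peakOf (insert (m + 1) K),
        ¬(j - 1 ∈ insert (m + 1) E' ∧ j ∈ insert (m + 1) E')) ↔
      ((∀ j ∈ peakOf K, ¬(j - 1 ∈ E' ∧ j ∈ E')) ∧ ¬(m ∈ E' ∧ m ∉ K)) := by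
  constructor
  · intro h
    constructor
    · exact (chi_E_insert hK).mp fun j hj => h j ((peakOf_insert_top hK).mpr (Or.inl hj))
    · rintro ⟨hmE', hmK⟩
      have hm1 : 1 ≤ m := (Finset.mem_Icc.mp (hE' hmE')).1
      have hpk : m + 1 ∈ peakOf (insert (m + 1) K) :=
        (peakOf_insert_top hK).mpr (Or.inr ⟨rfl, by omega, hmK⟩)
      refine h _ hpk ⟨?_, Finset.mem_insert_self _ _⟩
      have h3 : m + 1 - 1 = m := by omega
      rw [h3]
      exact Finset.mem_insert_of_mem hmE'
  · rintro ⟨h1, h2⟩ j hj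
    rcases (peakOf_insert_top hK).mp hj with hjK | ⟨rfl, hge, hmK⟩
    · exact ((chi_E_insert hK).mpr h1) j hjK
    · rintro ⟨ha1, _⟩
      have h3 : m + 1 - 1 = m := by omega
      rw [h3] at ha1
      rcases Finset.mem_insert.mp ha1 with h4 | h4
      · omega
      · exact h2 ⟨h4, hmK⟩

lemma insert_inter_insert {a : ℕ} {s t : Finset ℕ} :
    insert a s ∩ insert a t = insert a (s ∩ t) := by
  ext x
  simp only [Finset.mem_inter, Finset.mem_insert]
  tauto

/-- The key double induction: nonsingularity of the coefficient systems. -/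
lemma key_induction (q : ℂ) (hQ : ∀ k, 1 ≤ k → qaux q k ≠ 0) :
    ∀ m : ℕ, ∀ p : ℕ, ∀ v : Finset ℕ → ℂ,
      (∀ E ∈ (Finset.Icc 1 m).powerset,
        ∑ J ∈ (Finset.Icc 1 m).powerset, v J *
          ((if ∀ j ∈ peakOf J, ¬(j - 1 ∈ E ∧ j ∈ E) then q ^ (J ∩ E).card else 0) *
           (if m ∈ E ∧ m ∉ J then 1 else qaux q (p + 1))) = 0) →
      ∀ J ∈ (Finset.Icc 1 m).powerset, v J = 0 := by
  intro m
  induction m with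
  | zero =>
      intro p v hyp J hJ
      have hIcc : Finset.Icc 1 0 = (∅ : Finset ℕ) := by
        apply Finset.Icc_eq_empty; omega
      rw [hIcc, Finset.mem_powerset, Finset.subset_empty] at hJ
      subst hJ
      have h0 := hyp ∅ (by rw [hIcc]; exact Finset.empty_mem_powerset _)
      rw [hIcc, Finset.powerset_empty, Finset.sum_singleton] at h0
      have hpk : peakOf (∅ : Finset ℕ) = ∅ := by
        unfold peakOf; exact Finset.filter_empty _
      rw [hpk] at h0
      simp only [Finset.notMem_empty, false_and, and_false, if_false,
        Finset.empty_inter, Finset.card_empty, pow_zero] at h0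
      have : v ∅ * qaux q (p + 1) = 0 := by
        simpa using h0
      rcases mul_eq_zero.mp this with h | h
      · exact h
      · exact absurd h (hQ (p + 1) (by omega))
  | succ m IH =>
      intro p v hyp
      have hIcc : Finset.Icc 1 (m + 1) = insert (m + 1) (Finset.Icc 1 m) :=
        (Finset.insert_Icc_right_eq_Icc_add_one (by omega)).symm
      have ha : m + 1 ∉ Finset.Icc 1 m := by
        intro h; exact absurd (Finset.mem_Icc.mp h).2 (by omega)
      -- Step A : the sums over E ⊆ [m]
      have stepA : ∀ K ∈ (Finset.Icc 1 m).powerset, v K + v (insert (m + 1) K) = 0 := by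
        apply IH 0 (fun K => v K + v (insert (m + 1) K))
        intro E hE
        have hEsub : E ⊆ Finset.Icc 1 m := Finset.mem_powerset.mp hE
        have hanE : (m + 1) ∉ E := fun h => ha (hEsub h)
        have h0 := hyp E (by
          rw [Finset.mem_powerset, hIcc]
          exact subset_trans hEsub (Finset.subset_insert _ _))
        rw [hIcc, Finset.sum_powerset_insert ha] at h0
        have hmE : m + 1 ∉ E := hanE
        have e1 : ∀ K ∈ (Finset.Icc 1 m).powerset,
            v K * ((if ∀ j ∈ peakOf K, ¬(j - 1 ∈ E ∧ j ∈ E) then q ^ (K ∩ E).card else 0) *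
              (if m + 1 ∈ E ∧ m + 1 ∉ K then 1 else qaux q (p + 1)))
            = v K * (if ∀ j ∈ peakOf K, ¬(j - 1 ∈ E ∧ j ∈ E) then q ^ (K ∩ E).card else 0) *
                qaux q (p + 1) := by
          intro K _
          rw [if_neg (show ¬(m + 1 ∈ E ∧ m + 1 ∉ K) from fun h => hmE h.1)]
          ring
        have e2 : ∀ K ∈ (Finset.Icc 1 m).powerset,
            v (insert (m + 1) K) *
              ((if ∀ j ∈ peakOf (insert (m + 1) K), ¬(j - 1 ∈ E ∧ j ∈ E)
                  then q ^ ((insert (m + 1) K) ∩ E).card else 0) *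
               (if m + 1 ∈ E ∧ m + 1 ∉ insert (m + 1) K then 1 else qaux q (p + 1)))
            = v (insert (m + 1) K) *
                (if ∀ j ∈ peakOf K, ¬(j - 1 ∈ E ∧ j ∈ E) then q ^ (K ∩ E).card else 0) *
                qaux q (p + 1) := by
          intro K hK
          have hKsub : K ⊆ Finset.Icc 1 m := Finset.mem_powerset.mp hK
          rw [Finset.insert_inter_of_notMem hanE,
            if_congr (chi_insert_top hKsub hEsub) rfl rfl,
            if_neg (show ¬(m + 1 ∈ E ∧ m + 1 ∉ insert (m + 1) K) from fun h => hmE h.1)]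
          ring
        rw [Finset.sum_congr rfl e1, Finset.sum_congr rfl e2, ← Finset.sum_add_distrib] at h0
        have h1 : (∑ K ∈ (Finset.Icc 1 m).powerset,
            (v K + v (insert (m + 1) K)) *
              (if ∀ j ∈ peakOf K, ¬(j - 1 ∈ E ∧ j ∈ E) then q ^ (K ∩ E).card else 0)) *
            qaux q (p + 1) = 0 := by
          rw [Finset.sum_mul]
          refine Eq.trans ?_ h0
          apply Finset.sum_congr rfl
          intro K _
          ring
        rcases mul_eq_zero.mp h1 with h2 | h2
        · refine Eq.trans ?_ h2
          apply Finset.sum_congr rfl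
          intro K _
          rw [qaux_one, ite_self, mul_one]
        · exact absurd h2 (hQ (p + 1) (by omega))
      -- Step B : the sums over insert (m + 1) E'
      have stepB : ∀ K ∈ (Finset.Icc 1 m).powerset, v K = 0 := by
        apply IH (p + 1) v
        intro E' hE'
        have hEsub : E' ⊆ Finset.Icc 1 m := Finset.mem_powerset.mp hE'
        have hanE : (m + 1) ∉ E' := fun h => ha (hEsub h)
        have h0 := hyp (insert (m + 1) E') (by
          rw [Finset.mem_powerset, hIcc]
          exact Finset.insert_subset_insert (m + 1) hEsub)
        rw [hIcc, Finset.sum_powerset_insert ha] at h0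
        have e1 : ∀ K ∈ (Finset.Icc 1 m).powerset,
            v K * ((if ∀ j ∈ peakOf K, ¬(j - 1 ∈ insert (m + 1) E' ∧ j ∈ insert (m + 1) E')
                then q ^ (K ∩ insert (m + 1) E').card else 0) *
              (if m + 1 ∈ insert (m + 1) E' ∧ m + 1 ∉ K then 1 else qaux q (p + 1)))
            = v K * (if ∀ j ∈ peakOf K, ¬(j - 1 ∈ E' ∧ j ∈ E')
                then q ^ (K ∩ E').card else 0) := by
          intro K hK
          have hKsub : K ⊆ Finset.Icc 1 m := Finset.mem_powerset.mp hK
          have haK : m + 1 ∉ K := fun h => ha (hKsub h)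
          rw [Finset.inter_insert_of_notMem (fun h => ha (hKsub h)),
            if_congr (chi_E_insert hKsub) rfl rfl,
            if_pos (show m + 1 ∈ insert (m + 1) E' ∧ m + 1 ∉ K from
              ⟨Finset.mem_insert_self _ _, haK⟩)]
          ring
        have e2 : ∀ K ∈ (Finset.Icc 1 m).powerset,
            v (insert (m + 1) K) *
              ((if ∀ j ∈ peakOf (insert (m + 1) K),
                    ¬(j - 1 ∈ insert (m + 1) E' ∧ j ∈ insert (m + 1) E')
                  then q ^ ((insert (m + 1) K) ∩ insert (m + 1) E').card else 0) *
               (if m + 1 ∈ insert (m + 1) E' ∧ m + 1 ∉ insert (m + 1) K then 1 else qaux q (p + 1)))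
            = - (v K * ((if (∀ j ∈ peakOf K, ¬(j - 1 ∈ E' ∧ j ∈ E')) ∧ ¬(m ∈ E' ∧ m ∉ K)
                  then q ^ ((K ∩ E').card + 1) else 0) * qaux q (p + 1))) := by
          intro K hK
          have hKsub : K ⊆ Finset.Icc 1 m := Finset.mem_powerset.mp hK
          have haK : (m + 1) ∉ K := fun h => ha (hKsub h)
          have hvK : v (insert (m + 1) K) = - v K := by
            have h := stepA K hK
            linear_combination h
          rw [hvK, insert_inter_insert,
            Finset.card_insert_of_notMem (fun h => haK (Finset.mem_inter.mp h).1),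
            if_congr (chi_insert_insert hKsub hEsub) rfl rfl,
            if_neg (show ¬(m + 1 ∈ insert (m + 1) E' ∧ m + 1 ∉ insert (m + 1) K) from
              fun h => h.2 (Finset.mem_insert_self _ _))]
          ring
        rw [Finset.sum_congr rfl e1, Finset.sum_congr rfl e2, ← Finset.sum_add_distrib] at h0
        refine Eq.trans ?_ h0
        apply Finset.sum_congr rfl
        intro K _
        have hsucc : qaux q (p + 1 + 1) = 1 - q * qaux q (p + 1) := qaux_succ q (p + 1)
        by_cases hbad : m ∈ E' ∧ m ∉ K
        · rw [if_pos hbad, if_neg (show ¬((∀ j ∈ peakOf K, ¬(j - 1 ∈ E' ∧ j ∈ E')) ∧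
            ¬(m ∈ E' ∧ m ∉ K)) from fun h => h.2 hbad)]
          ring
        · rw [if_neg hbad]
          by_cases hχ : ∀ j ∈ peakOf K, ¬(j - 1 ∈ E' ∧ j ∈ E')
          · rw [if_pos hχ, if_pos ⟨hχ, hbad⟩, hsucc]
            ring
          · rw [if_neg hχ, if_neg (show ¬((∀ j ∈ peakOf K, ¬(j - 1 ∈ E' ∧ j ∈ E')) ∧
              ¬(m ∈ E' ∧ m ∉ K)) from fun h => hχ h.1)]
            ring
      -- combine
      intro J hJ
      rw [Finset.mem_powerset, hIcc] at hJ
      by_cases haJ : (m + 1) ∈ J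
      · have hJ' : J.erase (m + 1) ⊆ Finset.Icc 1 m := by
          intro x hx
          have hxJ := Finset.mem_of_mem_erase hx
          have hxa := Finset.ne_of_mem_erase hx
          rcases Finset.mem_insert.mp (hJ hxJ) with h | h
          · exact absurd h hxa
          · exact h
        have hkey := stepA (J.erase (m + 1)) (Finset.mem_powerset.mpr hJ')
        have hz := stepB (J.erase (m + 1)) (Finset.mem_powerset.mpr hJ')
        have hins : insert (m + 1) (J.erase (m + 1)) = J := Finset.insert_erase haJ
        rw [hz, zero_add, hins] at hkey
        exact hkey
      · have hJ' : J ⊆ Finset.Icc 1 m := by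
          intro x hx
          rcases Finset.mem_insert.mp (hJ hx) with h | h
          · exact absurd (h ▸ hx) haJ
          · exact h
        exact stepB J (Finset.mem_powerset.mpr hJ')


lemma mem_etaSeqs_empty {n : ℕ} {d : ℕ →₀ ℕ} {g : Fin n → ℕ} :
    g ∈ etaSeqs n ∅ d ↔ (∀ j, g j ∈ d.support) ∧ Mono g ∧ (∀ j, 1 ≤ g j) ∧
      monomialOf g = d := by
  unfold etaSeqs Mono
  rw [Finset.mem_filter, Fintype.mem_piFinset]
  simp only [Finset.notMem_empty, false_implies, implies_true, true_and]

lemma Lseqs_eq_filter {n : ℕ} (I : Finset ℕ) (d : ℕ →₀ ℕ) :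
    Lseqs n I d = (etaSeqs n ∅ d).filter
      (fun g => ∀ j ∈ peakOf I, fget g (j - 1) < fget g (j + 1)) := by
  unfold Lseqs etaSeqs
  rw [Finset.filter_filter]
  apply Finset.filter_congr
  intro g _
  simp only [Finset.notMem_empty, false_implies, implies_true, true_and]
  tauto

lemma fget_le_succ {n : ℕ} {g : Fin n → ℕ} (hm : Mono g) {t : ℕ} (h1 : 1 ≤ t)
    (h2 : t ≤ n - 1) (hn : 1 ≤ n) : fget g t ≤ fget g (t + 1) := by
  have ha : t - 1 < n := by omega
  have hb : t + 1 - 1 < n := by omega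
  rw [fget_eq g ha, fget_eq g hb]
  exact hm _ _ (by rw [Fin.mk_le_mk]; omega)

/-- If the peak value at `i` is strict, toggling `i` in `J` does not change the
peak condition. -/
lemma cond_insert_iff {n : ℕ} {g : Fin n → ℕ} (hm : Mono g) (hn : 1 ≤ n) {i : ℕ}
    (hi1 : 1 ≤ i) (hi2 : i ≤ n - 1) (hne : fget g i ≠ fget g (i + 1)) {J : Finset ℕ}
    (hJ : J ⊆ Finset.Icc 1 (n - 1)) (hiJ : i ∉ J) :
    ((∀ j ∈ peakOf (insert i J), fget g (j - 1) < fget g (j + 1)) ↔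
      (∀ j ∈ peakOf J, fget g (j - 1) < fget g (j + 1))) := by
  have auto : ∀ j, 2 ≤ j → j ≤ n - 1 → (j = i ∨ j = i + 1) →
      fget g (j - 1) < fget g (j + 1) := by
    intro j hj2 hjn hcase
    rcases hcase with rfl | rfl
    · -- j = i
      have hab : fget g (j - 1) ≤ fget g (j - 1 + 1) := fget_le_succ hm (by omega) (by omega) hn
      have hbc : fget g j ≤ fget g (j + 1) := fget_le_succ hm (by omega) (by omega) hn
      have he : j - 1 + 1 = j := by omega
      rw [he] at hab
      omega
    · -- j = i + 1
      have hab : fget g i ≤ fget g (i + 1) := fget_le_succ hm (by omega) (by omega) hn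
      have hbc : fget g (i + 1) ≤ fget g (i + 1 + 1) := fget_le_succ hm (by omega) (by omega) hn
      have he : i + 1 - 1 = i := by omega
      rw [he]
      omega
  constructor
  · intro h j hj
    obtain ⟨hjJ, hj2, hj1J⟩ := mem_peakOf.mp hj
    have hjn := Finset.mem_Icc.mp (hJ hjJ)
    by_cases hcase : j = i ∨ j = i + 1
    · exact auto j hj2 hjn.2 hcase
    · push_neg at hcase
      refine h j (mem_peakOf.mpr ⟨Finset.mem_insert_of_mem hjJ, hj2, ?_⟩)
      intro hmem
      rcases Finset.mem_insert.mp hmem with h' | h'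
      · omega
      · exact hj1J h'
  · intro h j hj
    obtain ⟨hjJ, hj2, hj1J⟩ := mem_peakOf.mp hj
    by_cases hcase : j = i ∨ j = i + 1
    · have hjn : j ≤ n - 1 := by
        rcases Finset.mem_insert.mp hjJ with h' | h'
        · omega
        · exact (Finset.mem_Icc.mp (hJ h')).2
      exact auto j hj2 hjn hcase
    · push_neg at hcase
      rcases Finset.mem_insert.mp hjJ with h' | h'
      · exact absurd h' hcase.1
      · refine h j (mem_peakOf.mpr ⟨h', hj2, fun hh => hj1J (Finset.mem_insert_of_mem hh)⟩)

lemma const_of_eq_steps {n : ℕ} {g : Fin n → ℕ}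
    (hconst : ∀ t ∈ Finset.Icc 1 (n - 1), fget g t = fget g (t + 1)) :
    ∀ u (hu : u < n) (h0 : 0 < n), g ⟨u, hu⟩ = g ⟨0, h0⟩ := by
  intro u
  induction u with
  | zero => intro hu h0; rfl
  | succ u ih =>
      intro hu h0
      have hu' : u < n := by omega
      have hc := hconst (u + 1) (Finset.mem_Icc.mpr ⟨by omega, by omega⟩)
      rw [fget_eq g (show u + 1 - 1 < n by omega),
        fget_eq g (show u + 1 + 1 - 1 < n by omega)] at hc
      have h1 : g ⟨u + 1, hu⟩ = g ⟨u, hu'⟩ := by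
        simp only [Nat.add_sub_cancel] at hc
        exact hc.symm
      rw [h1, ih hu' h0]

/-- The coefficientwise alternating-sum identity giving the linear dependence. -/
lemma alt_sum_coeff (q : ℂ) {n : ℕ} (hn : 2 ≤ n) (hqn : (-q) ^ n = 1) (d : ℕ →₀ ℕ) :
    ∑ J ∈ (Finset.Icc 1 (n - 1)).powerset, (-1 : ℂ) ^ J.card * Lq q n J d = 0 := by
  have hn1 : 1 ≤ n := by omega
  have expand : ∀ J : Finset ℕ, Lq q n J d
      = ∑ g ∈ etaSeqs n ∅ d,
          (if ∀ j ∈ peakOf J, fget g (j - 1) < fget g (j + 1)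
            then q ^ (J.filter fun j => fget g j = fget g (j + 1)).card *
              (q + 1) ^ (Finset.image g Finset.univ).card
            else 0) := by
    intro J
    rw [Lq_apply, Lseqs_eq_filter, Finset.sum_filter]
  calc ∑ J ∈ (Finset.Icc 1 (n - 1)).powerset, (-1 : ℂ) ^ J.card * Lq q n J d
      = ∑ J ∈ (Finset.Icc 1 (n - 1)).powerset, ∑ g ∈ etaSeqs n ∅ d,
          (-1 : ℂ) ^ J.card *
          (if ∀ j ∈ peakOf J, fget g (j - 1) < fget g (j + 1)
            then q ^ (J.filter fun j => fget g j = fget g (j + 1)).card *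
              (q + 1) ^ (Finset.image g Finset.univ).card
            else 0) := by
        apply Finset.sum_congr rfl
        intro J _
        rw [expand J, Finset.mul_sum]
    _ = ∑ g ∈ etaSeqs n ∅ d, ∑ J ∈ (Finset.Icc 1 (n - 1)).powerset,
          (-1 : ℂ) ^ J.card *
          (if ∀ j ∈ peakOf J, fget g (j - 1) < fget g (j + 1)
            then q ^ (J.filter fun j => fget g j = fget g (j + 1)).card *
              (q + 1) ^ (Finset.image g Finset.univ).card
            else 0) := Finset.sum_comm
    _ = 0 := by
        apply Finset.sum_eq_zero
        intro g hg
        obtain ⟨hsupp, hm, hpos, hmon⟩ := mem_etaSeqs_empty.mp hg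
        by_cases hconst : ∀ t ∈ Finset.Icc 1 (n - 1), fget g t = fget g (t + 1)
        · -- the constant sequence
          have h0n : 0 < n := by omega
          have hgc : ∀ j : Fin n, g j = g ⟨0, h0n⟩ := by
            intro j
            obtain ⟨u, hu⟩ := j
            exact const_of_eq_steps hconst u hu h0n
          have himg : Finset.image g Finset.univ = {g ⟨0, h0n⟩} := by
            ext x
            simp only [Finset.mem_image, Finset.mem_univ, true_and, Finset.mem_singleton]
            constructor
            · rintro ⟨j, rfl⟩; exact hgc j
            · rintro rfl; exact ⟨⟨0, h0n⟩, rfl⟩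
          have hcond : ∀ J ∈ (Finset.Icc 1 (n - 1)).powerset,
              ((∀ j ∈ peakOf J, fget g (j - 1) < fget g (j + 1)) ↔ peakOf J = ∅) := by
            intro J hJ
            have hJsub := Finset.mem_powerset.mp hJ
            constructor
            · intro h
              rw [Finset.eq_empty_iff_forall_notMem]
              intro j hj
              have hlt := h j hj
              obtain ⟨hjJ, hj2, _⟩ := mem_peakOf.mp hj
              have hjn := Finset.mem_Icc.mp (hJsub hjJ)
              rw [fget_eq g (show j - 1 - 1 < n by omega),
                fget_eq g (show j + 1 - 1 < n by omega)] at hlt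
              rw [hgc ⟨j - 1 - 1, _⟩, hgc ⟨j + 1 - 1, _⟩] at hlt
              omega
            · intro h
              rw [h]
              intro j hj
              exact absurd hj (Finset.notMem_empty j)
          have hfilter : ∀ J ∈ (Finset.Icc 1 (n - 1)).powerset,
              (J.filter fun j => fget g j = fget g (j + 1)) = J := by
            intro J hJ
            have hJsub := Finset.mem_powerset.mp hJ
            apply Finset.filter_true_of_mem
            intro j hjJ
            exact hconst j (hJsub hjJ)
          have hchar : (Finset.Icc 1 (n - 1)).powerset.filter (fun J => peakOf J = ∅)
              = (Finset.range n).image (fun t => Finset.Icc 1 t) := by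
            ext J
            simp only [Finset.mem_filter, Finset.mem_powerset, Finset.mem_image,
              Finset.mem_range]
            constructor
            · rintro ⟨hJsub, hJpk⟩
              by_cases hJe : J = ∅
              · refine ⟨0, by omega, ?_⟩
                rw [hJe]
                apply Finset.Icc_eq_empty
                omega
              · have hne : J.Nonempty := Finset.nonempty_iff_ne_empty.mpr hJe
                set M := J.max' hne with hM
                have hMJ : M ∈ J := Finset.max'_mem _ _
                have hMn := Finset.mem_Icc.mp (hJsub hMJ)
                refine ⟨M, by omega, ?_⟩
                have hdown : ∀ k, ∀ t, t + k = M → 1 ≤ t → t ∈ J := by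
                  intro k
                  induction k with
                  | zero =>
                      intro t ht _
                      have : t = M := by omega
                      rw [this]; exact hMJ
                  | succ k ih =>
                      intro t ht h1
                      have ht1 : t + 1 ∈ J := ih (t + 1) (by omega) (by omega)
                      by_contra htJ
                      have hpk : t + 1 ∈ peakOf J := by
                        refine mem_peakOf.mpr ⟨ht1, by omega, ?_⟩
                        simpa using htJ
                      rw [hJpk] at hpk
                      exact Finset.notMem_empty _ hpk
                apply Finset.Subset.antisymm
                · intro x hx
                  have hxm := Finset.mem_Icc.mp hx
                  exact hdown (M - x) x (by omega) hxm.1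
                · intro x hxJ
                  have hxn := Finset.mem_Icc.mp (hJsub hxJ)
                  exact Finset.mem_Icc.mpr ⟨hxn.1, Finset.le_max' _ _ hxJ⟩
            · rintro ⟨t, htn, rfl⟩
              constructor
              · exact Finset.Icc_subset_Icc_right (by omega)
              · rw [Finset.eq_empty_iff_forall_notMem]
                intro j hj
                obtain ⟨hjt, hj2, hj1⟩ := mem_peakOf.mp hj
                have := Finset.mem_Icc.mp hjt
                exact hj1 (Finset.mem_Icc.mpr ⟨by omega, by omega⟩)
          calc ∑ J ∈ (Finset.Icc 1 (n - 1)).powerset,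
                (-1 : ℂ) ^ J.card *
                (if ∀ j ∈ peakOf J, fget g (j - 1) < fget g (j + 1)
                  then q ^ (J.filter fun j => fget g j = fget g (j + 1)).card *
                    (q + 1) ^ (Finset.image g Finset.univ).card
                  else 0)
              = ∑ J ∈ (Finset.Icc 1 (n - 1)).powerset,
                  (if peakOf J = ∅ then (-q) ^ J.card * (q + 1) else 0) := by
                apply Finset.sum_congr rfl
                intro J hJ
                rw [if_congr (hcond J hJ) rfl rfl, hfilter J hJ, himg,
                  Finset.card_singleton, pow_one, mul_ite, mul_zero]
                by_cases hpk : peakOf J = ∅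
                · rw [if_pos hpk, if_pos hpk, neg_pow]
                  ring
                · rw [if_neg hpk, if_neg hpk]
            _ = ∑ J ∈ (Finset.Icc 1 (n - 1)).powerset.filter (fun J => peakOf J = ∅),
                  (-q) ^ J.card * (q + 1) := (Finset.sum_filter _ _).symm
            _ = ∑ t ∈ Finset.range n, (-q) ^ t * (q + 1) := by
                rw [hchar, Finset.sum_image]
                · apply Finset.sum_congr rfl
                  intro t _
                  rw [Nat.card_Icc, Nat.add_sub_cancel]
                · intro t1 _ t2 _ hEq
                  have h1 : (Finset.Icc 1 t1).card = (Finset.Icc 1 t2).card := by rw [show Finset.Icc 1 t1 = Finset.Icc 1 t2 from hEq]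
                  rw [Nat.card_Icc, Nat.card_Icc] at h1
                  omega
            _ = 0 := by
                rw [← Finset.sum_mul]
                have h := one_add_mul_qaux q n
                rw [hqn] at h
                have h2 : (1 + q) * qaux q n = 0 := by rw [h]; ring
                rw [qaux] at h2
                linear_combination h2
        · -- non-constant: sign-reversing involution
          push_neg at hconst
          obtain ⟨i, hiI, hne⟩ := hconst
          have hi := Finset.mem_Icc.mp hiI
          apply Finset.sum_involution
            (fun J _ => if i ∈ J then J.erase i else insert i J)
          · -- f J + f (σ J) = 0
            intro J hJ
            have hJsub := Finset.mem_powerset.mp hJ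
            have hPi : ¬ (fget g i = fget g (i + 1)) := hne
            by_cases hiJ : i ∈ J
            · rw [if_pos hiJ]
              have hcond := cond_insert_iff hm hn1 hi.1 hi.2 hne
                (fun x hx => hJsub (Finset.mem_of_mem_erase hx) : J.erase i ⊆ _)
                (Finset.notMem_erase i J)
              rw [Finset.insert_erase hiJ] at hcond
              have hfilt : ((J.erase i).filter fun j => fget g j = fget g (j + 1))
                  = (J.filter fun j => fget g j = fget g (j + 1)) := by
                rw [Finset.filter_erase]
                apply Finset.erase_eq_of_notMem
                intro hmem
                exact hPi (Finset.mem_filter.mp hmem).2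
              have hcard : (J.erase i).card + 1 = J.card := Finset.card_erase_add_one hiJ
              rw [hfilt, if_congr hcond.symm rfl rfl]
              rw [← hcard, pow_succ]
              ring
            · rw [if_neg hiJ]
              have hcond := cond_insert_iff hm hn1 hi.1 hi.2 hne hJsub hiJ
              have hfilt : ((insert i J).filter fun j => fget g j = fget g (j + 1))
                  = (J.filter fun j => fget g j = fget g (j + 1)) := by
                rw [Finset.filter_insert, if_neg hPi]
              have hcard : (insert i J).card = J.card + 1 :=
                Finset.card_insert_of_notMem hiJ
              rw [hfilt, if_congr hcond rfl rfl, hcard, pow_succ]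
              ring
          · -- σ J ≠ J
            intro J hJ _
            by_cases hiJ : i ∈ J
            · rw [if_pos hiJ]
              intro h
              exact (Finset.erase_eq_self.mp h) hiJ
            · rw [if_neg hiJ]
              intro h
              exact hiJ (Finset.insert_eq_self.mp h)
          · -- involutive
            intro J hJ
            by_cases hiJ : i ∈ J
            · rw [if_pos hiJ, if_neg (Finset.notMem_erase i J), Finset.insert_erase hiJ]
            · rw [if_neg hiJ, if_pos (Finset.mem_insert_self i J), Finset.erase_insert hiJ]
          · -- σ J ∈ powerset
            intro J hJ
            have hJsub := Finset.mem_powerset.mp hJ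
            by_cases hiJ : i ∈ J
            · rw [if_pos hiJ]
              exact Finset.mem_powerset.mpr (subset_trans (Finset.erase_subset i J) hJsub)
            · rw [if_neg hiJ]
              exact Finset.mem_powerset.mpr (Finset.insert_subset hiI hJsub)

/-- The families `(L^{(q)}_{n,I})_{I ⊆ [n-1]}` are linearly independent
for every `n ≥ 1` if and only if `q` is not a root of unity. -/
theorem Lq_linearIndependent_iff_not_root_of_unity (q : ℂ) :
    (∀ n : ℕ, 1 ≤ n →
        LinearIndependent ℂ
          (fun I : {I : Finset ℕ // I ⊆ Finset.Icc 1 (n - 1)} => Lq q n I.1)) ↔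
      (∀ m : ℕ, 1 ≤ m → q ^ m ≠ 1) := by
  constructor
  · -- linear independence forces q not to be a root of unity
    intro hLI m hm hq1
    have hqn : (-q) ^ (2 * m) = 1 := by
      calc (-q) ^ (2 * m) = ((-q) ^ 2) ^ m := by rw [pow_mul]
        _ = (q ^ 2) ^ m := by rw [neg_sq]
        _ = (q ^ m) ^ 2 := by rw [← pow_mul, mul_comm, pow_mul]
        _ = 1 := by rw [hq1, one_pow]
    have hdep := hLI (2 * m) (by omega)
    rw [linearIndependent_iff'] at hdep
    set s : Finset {I : Finset ℕ // I ⊆ Finset.Icc 1 (2 * m - 1)} :=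
      (Finset.Icc 1 (2 * m - 1)).powerset.attach.map
        ⟨fun x => ⟨x.1, Finset.mem_powerset.mp x.2⟩, by
          intro x y hxy
          apply Subtype.ext
          have := congrArg Subtype.val hxy
          simpa using this⟩ with hs
    have hsum : ∑ i ∈ s, ((-1 : ℂ) ^ (i.1.card)) •
        (fun I : {I : Finset ℕ // I ⊆ Finset.Icc 1 (2 * m - 1)} => Lq q (2 * m) I.1) i
          = 0 := by
      rw [hs, Finset.sum_map]
      calc ∑ x ∈ (Finset.Icc 1 (2 * m - 1)).powerset.attach,
            ((-1 : ℂ) ^ ((⟨x.1, Finset.mem_powerset.mp x.2⟩ :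
                {I : Finset ℕ // I ⊆ Finset.Icc 1 (2 * m - 1)}).1.card)) •
              Lq q (2 * m) (⟨x.1, Finset.mem_powerset.mp x.2⟩ :
                {I : Finset ℕ // I ⊆ Finset.Icc 1 (2 * m - 1)}).1
          = ∑ x ∈ (Finset.Icc 1 (2 * m - 1)).powerset.attach,
              ((-1 : ℂ) ^ (x.1.card)) • Lq q (2 * m) x.1 := rfl
        _ = ∑ J ∈ (Finset.Icc 1 (2 * m - 1)).powerset,
              ((-1 : ℂ) ^ (J.card)) • Lq q (2 * m) J :=
            Finset.sum_attach _ (fun J => ((-1 : ℂ) ^ (J.card)) • Lq q (2 * m) J)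
        _ = 0 := by
            apply MvPowerSeries.ext
            intro d
            rw [map_sum, map_zero]
            have : ∀ J ∈ (Finset.Icc 1 (2 * m - 1)).powerset,
                (MvPowerSeries.coeff d) (((-1 : ℂ) ^ (J.card)) • Lq q (2 * m) J)
                  = (-1 : ℂ) ^ (J.card) * Lq q (2 * m) J d := by
              intro J _
              rw [map_smul, smul_eq_mul, MvPowerSeries.coeff_apply]
            rw [Finset.sum_congr rfl this]
            exact alt_sum_coeff q (by omega) hqn d
    have hmem : (⟨∅, Finset.empty_subset _⟩ :
        {I : Finset ℕ // I ⊆ Finset.Icc 1 (2 * m - 1)}) ∈ s := by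
      rw [hs, Finset.mem_map]
      exact ⟨⟨∅, Finset.mem_powerset.mpr (Finset.empty_subset _)⟩,
        Finset.mem_attach _ _, rfl⟩
    have hzero := hdep s _ hsum _ hmem
    simp at hzero
  · -- q not a root of unity forces linear independence
    intro hq n hn
    have hq1 : q + 1 ≠ 0 := by
      intro h
      have hq2 : q = -1 := by linear_combination h
      exact hq 2 (by omega) (by rw [hq2]; ring)
    have hQ : ∀ k, 1 ≤ k → qaux q k ≠ 0 := by
      intro k hk h0
      have h1 := one_add_mul_qaux q k
      rw [h0, mul_zero] at h1
      have h2 : (-q) ^ k = 1 := by linear_combination h1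
      have h3 : q ^ (2 * k) = 1 := by
        calc q ^ (2 * k) = (q ^ 2) ^ k := by rw [pow_mul]
          _ = ((-q) ^ 2) ^ k := by rw [neg_sq]
          _ = ((-q) ^ k) ^ 2 := by rw [← pow_mul, mul_comm, pow_mul]
          _ = 1 := by rw [h2, one_pow]
      exact hq (2 * k) (by omega) h3
    rw [linearIndependent_iff']
    intro s g hsum i hi
    set u : Finset ℕ → ℂ := fun J => ∑ x ∈ s.filter (fun x => x.1 = J), g x with hu
    have hmaps : ∀ x ∈ s, x.1 ∈ (Finset.Icc 1 (n - 1)).powerset :=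
      fun x _ => Finset.mem_powerset.mpr x.2
    have hsum2 : ∑ J ∈ (Finset.Icc 1 (n - 1)).powerset, u J • Lq q n J = 0 := by
      calc ∑ J ∈ (Finset.Icc 1 (n - 1)).powerset, u J • Lq q n J
          = ∑ J ∈ (Finset.Icc 1 (n - 1)).powerset,
              ∑ x ∈ s.filter (fun x => x.1 = J), g x • Lq q n x.1 := by
            apply Finset.sum_congr rfl
            intro J _
            rw [hu, Finset.sum_smul]
            apply Finset.sum_congr rfl
            intro x hx
            rw [(Finset.mem_filter.mp hx).2]
        _ = ∑ x ∈ s, g x • Lq q n x.1 := Finset.sum_fiberwise_of_maps_to hmaps _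
        _ = 0 := hsum
    have hcoeff : ∀ E ∈ (Finset.Icc 1 (n - 1)).powerset,
        ∑ J ∈ (Finset.Icc 1 (n - 1)).powerset, u J *
          ((if ∀ j ∈ peakOf J, ¬(j - 1 ∈ E ∧ j ∈ E) then q ^ (J ∩ E).card else 0) *
           (if (n - 1) ∈ E ∧ (n - 1) ∉ J then 1 else qaux q (0 + 1))) = 0 := by
      intro E hE
      have hEsub := Finset.mem_powerset.mp hE
      have hc := congrArg (MvPowerSeries.coeff (monomialOf (gseqF n E))) hsum2
      rw [map_sum, map_zero] at hc
      have hc2 : ∀ J ∈ (Finset.Icc 1 (n - 1)).powerset,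
          (MvPowerSeries.coeff (monomialOf (gseqF n E))) (u J • Lq q n J)
            = (u J * (if ∀ j ∈ peakOf J, ¬(j - 1 ∈ E ∧ j ∈ E)
                then q ^ (J ∩ E).card else 0)) * (q + 1) ^ (n - E.card) := by
        intro J hJ
        rw [map_smul, smul_eq_mul, MvPowerSeries.coeff_apply,
          Lq_coeff_gseq q hn (Finset.mem_powerset.mp hJ) hEsub]
        ring
      rw [Finset.sum_congr rfl hc2, ← Finset.sum_mul] at hc
      rcases mul_eq_zero.mp hc with h2 | h2
      · refine Eq.trans ?_ h2
        apply Finset.sum_congr rfl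
        intro J _
        rw [qaux_one, ite_self, mul_one]
      · exact absurd h2 (pow_ne_zero _ hq1)
    have hker := key_induction q hQ (n - 1) 0 u hcoeff
    have hiu : u i.1 = g i := by
      show (∑ x ∈ s.filter (fun x => x.1 = i.1), g x) = g i
      have hfe : s.filter (fun x => x.1 = i.1) = s.filter (fun x => x = i) := by
        apply Finset.filter_congr
        intro x _
        rw [← Subtype.ext_iff]
      rw [hfe, Finset.filter_eq', if_pos hi, Finset.sum_singleton]
    rw [← hiu, hker i.1 (Finset.mem_powerset.mpr i.2)]

end ExtPeaks
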